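/- The multiset ordering on finite multisets over a well-ordered set is itself a well-ordering. Precisely: if (S, ≤) is a well-ordered set, then the ordering ≤_m on finite multisets over S, defined by f ≤_m g iff for every x ∈ S with f(x) > g(x) there exists y > x with g(y) > f(y), is a well-order. -/

import Mathlib

/-- An algebraic signature: a type of operation symbols with arities. -/
structure Signature where
  ops : Type
  arity : ops → ℕ

/-- An algebra for a signature `S`. -/
structure Alg (S : Signature) where
  carrier : Type
  interp : ∀ o : S.ops, (Fin (S.arity o) → carrier) → carrier

/-- Terms over a set `X` of variables. -/
inductive Term (S : Signature) (X : Type) : Type where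
  | var : X → Term S X
  | op : (o : S.ops) → (Fin (S.arity o) → Term S X) → Term S X

variable {S : Signature}

/-- Evaluation of a term in an algebra under an assignment of variables. -/
def Term.eval {X : Type} (A : Alg S) (h : X → A.carrier) : Term S X → A.carrier
  | .var x => h x
  | .op o args => A.interp o (fun i => (args i).eval A h)

/-- Application of a substitution to a term. -/
def Term.subst (σ : ℕ → Term S ℕ) : Term S ℕ → Term S ℕ
  | .var x => σ x
  | .op o args => .op o (fun i => (args i).subst σ)

/-- Homomorphisms of algebras. -/
def IsHom (A B : Alg S) (f : A.carrier → B.carrier) : Prop :=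
  ∀ (o : S.ops) (args : Fin (S.arity o) → A.carrier),
    f (A.interp o args) = B.interp o (fun i => f (args i))

/-- Embeddings of algebras: injective homomorphisms. -/
def IsEmbedding (A B : Alg S) (f : A.carrier → B.carrier) : Prop :=
  IsHom A B f ∧ Function.Injective f

/-- `A` embeds into `B` (i.e. `A` is isomorphic to a subalgebra of `B`). -/
def Embeds (A B : Alg S) : Prop := ∃ f, IsEmbedding A B f

/-- Isomorphism of algebras. -/
def Iso (A B : Alg S) : Prop := ∃ f, IsHom A B f ∧ Function.Bijective f

/-- Product of a family of algebras. -/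
def ProdAlg {I : Type} (F : I → Alg S) : Alg S where
  carrier := ∀ i, (F i).carrier
  interp o args i := (F i).interp o (fun j => args j i)

/-- Binary product of algebras. -/
def Alg.prod (A B : Alg S) : Alg S where
  carrier := A.carrier × B.carrier
  interp o args := (A.interp o (fun i => (args i).1), B.interp o (fun i => (args i).2))

/-- `A` is a subdirect product of the family `F`: there is an embedding of `A`
into the product whose composition with each projection is surjective. -/
def IsSubdirectProduct (A : Alg S) {I : Type} (F : I → Alg S) : Prop :=
  ∃ f : A.carrier → (ProdAlg F).carrier,
    IsEmbedding A (ProdAlg F) f ∧ ∀ i, Function.Surjective (fun a => f a i)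

/-- An equation: an ordered pair of terms. -/
abbrev Eqn (S : Signature) (X : Type) := Term S X × Term S X

/-- An equation holds in an algebra. -/
def Alg.SatisfiesEqn {X : Type} (A : Alg S) (e : Eqn S X) : Prop :=
  ∀ h : X → A.carrier, e.1.eval A h = e.2.eval A h

/-- An equation is valid in a class of algebras. -/
def EqValid (K : Set (Alg S)) (e : Eqn S ℕ) : Prop := ∀ A ∈ K, A.SatisfiesEqn e

/-- A quasiequation: finitely many premises and one conclusion. -/
structure Quasieq (S : Signature) where
  prem : List (Eqn S ℕ)
  concl : Eqn S ℕ

/-- A quasiequation holds in an algebra. -/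
def Alg.SatisfiesQ (A : Alg S) (q : Quasieq S) : Prop :=
  ∀ h : ℕ → A.carrier,
    (∀ e ∈ q.prem, e.1.eval A h = e.2.eval A h) →
      q.concl.1.eval A h = q.concl.2.eval A h

/-- The quasivariety generated by `K`: the class axiomatized by all
quasiequations valid in `K`. -/
def QGen (K : Set (Alg S)) : Set (Alg S) :=
  { A | ∀ q : Quasieq S, (∀ B ∈ K, B.SatisfiesQ q) → A.SatisfiesQ q }

/-- The variety generated by `K`: the class axiomatized by all
equations valid in `K`. -/
def VGen (K : Set (Alg S)) : Set (Alg S) :=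
  { A | ∀ e : Eqn S ℕ, (∀ B ∈ K, B.SatisfiesEqn e) → A.SatisfiesEqn e }

/-- A quasivariety is a class axiomatizable by quasiequations. -/
def IsQuasivariety (Q : Set (Alg S)) : Prop := QGen Q = Q

/-- `A` is `Q`-subdirectly irreducible: `A ∈ Q` and for every `Q`-subdirect
representation of `A`, `A` is isomorphic to one of the components. -/
def QSubdirectlyIrreducible (Q : Set (Alg S)) (A : Alg S) : Prop :=
  A ∈ Q ∧ ∀ (I : Type) (F : I → Alg S), (∀ i, F i ∈ Q) →
    IsSubdirectProduct A F → ∃ i, Iso A (F i)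

/-- A congruence on an algebra. -/
structure Cong (A : Alg S) where
  r : A.carrier → A.carrier → Prop
  iseqv : Equivalence r
  compat : ∀ (o : S.ops) (a b : Fin (S.arity o) → A.carrier),
    (∀ i, r (a i) (b i)) → r (A.interp o a) (A.interp o b)

def Cong.setoid {A : Alg S} (θ : Cong A) : Setoid A.carrier := ⟨θ.r, θ.iseqv⟩

/-- Quotient algebra of `A` by a congruence `θ`. -/
noncomputable def QuotAlg (A : Alg S) (θ : Cong A) : Alg S where
  carrier := Quotient θ.setoid
  interp o args := Quotient.mk θ.setoid (A.interp o (fun i => (args i).out))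

/-- The term algebra over variables `X`. -/
def TermAlg (S : Signature) (X : Type) : Alg S where
  carrier := Term S X
  interp := Term.op

/-- The congruence of all identifications valid in `K` on the term algebra:
the intersection of all congruences whose quotient embeds into a member of `K`. -/
def freeCong (K : Set (Alg S)) (X : Type) : Cong (TermAlg S X) where
  r φ ψ := ∀ A ∈ K, ∀ h : X → A.carrier, φ.eval A h = ψ.eval A h
  iseqv := by
    constructor
    · intro φ A hA h; rfl
    · intro φ ψ H A hA h; exact (H A hA h).symm
    · intro a b c H1 H2 A hA h; exact (H1 A hA h).trans (H2 A hA h)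
  compat := by
    intro o a b hab A hA h
    show Term.eval A h (Term.op o a) = Term.eval A h (Term.op o b)
    simp only [Term.eval]
    congr 1
    funext i
    exact hab i A hA h

/-- The free algebra of `K` over variables `X`. -/
noncomputable def FreeAlg (K : Set (Alg S)) (X : Type) : Alg S :=
  QuotAlg (TermAlg S X) (freeCong K X)

/-- `σ` is a `K`-unifier of the finite set of equations `Γ`. -/
def Unifier (K : Set (Alg S)) (σ : ℕ → Term S ℕ) (Γ : List (Eqn S ℕ)) : Prop :=
  ∀ e ∈ Γ, EqValid K (e.1.subst σ, e.2.subst σ)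

/-- `Γ` is `K`-unifiable. -/
def Unifiable (K : Set (Alg S)) (Γ : List (Eqn S ℕ)) : Prop := ∃ σ, Unifier K σ Γ

/-- The quasiequation `Γ ⇒ e` is `K`-admissible: every `K`-unifier of the
premises unifies the conclusion. -/
def Admissible (K : Set (Alg S)) (Γ : List (Eqn S ℕ)) (e : Eqn S ℕ) : Prop :=
  ∀ σ, Unifier K σ Γ → EqValid K (e.1.subst σ, e.2.subst σ)

/-- The quasiequation `Γ ⇒ e` is valid in the class `K` (`Γ ⊨_K e`). -/
def Models (K : Set (Alg S)) (Γ : List (Eqn S ℕ)) (e : Eqn S ℕ) : Prop :=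
  ∀ A ∈ K, ∀ h : ℕ → A.carrier,
    (∀ e' ∈ Γ, e'.1.eval A h = e'.2.eval A h) → e.1.eval A h = e.2.eval A h

/-- `Γ` is satisfiable in the algebra `A`. -/
def SatIn (A : Alg S) (Γ : List (Eqn S ℕ)) : Prop :=
  ∃ h : ℕ → A.carrier, ∀ e ∈ Γ, e.1.eval A h = e.2.eval A h

/-- Finite multisets over `α`: functions `α → ℕ` with finite support. -/
def FinMultiset (α : Type) : Type := {f : α → ℕ // (Function.support f).Finite}

/-- The Dershowitz–Manna multiset ordering: `f ≤ₘ g` iff whenever `f x > g x`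
there is some `y > x` with `g y > f y`. -/
def MultisetLE {α : Type} [LinearOrder α] (f g : FinMultiset α) : Prop :=
  ∀ x, g.1 x < f.1 x → ∃ y, x < y ∧ f.1 y < g.1 y

/-- Strict DM order is equivalent to: at the largest point of disagreement,
`f` is smaller than `g`. -/
theorem multisetLT_iff {α : Type} [LinearOrder α] {f g : FinMultiset α} :
    (MultisetLE f g ∧ f ≠ g) ↔
      ∃ m, (∀ y, m < y → f.1 y = g.1 y) ∧ f.1 m < g.1 m := by
  constructor
  · rintro ⟨hle, hne⟩
    have hD : {x | f.1 x ≠ g.1 x}.Finite := by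
      apply (f.2.union g.2).subset
      intro x hx
      by_contra hc
      simp only [Set.mem_union, Function.mem_support, not_or, not_not] at hc
      exact hx (by simp [hc.1, hc.2])
    have hne' : hD.toFinset.Nonempty := by
      rw [Set.Finite.toFinset_nonempty]
      by_contra hc
      push_neg at hc
      apply hne
      apply Subtype.ext
      funext x
      by_contra hx
      exact Set.eq_empty_iff_forall_notMem.mp hc x hx
    set m := hD.toFinset.max' hne' with hm
    have hmem : f.1 m ≠ g.1 m := by
      have := hD.toFinset.max'_mem hne'
      rwa [Set.Finite.mem_toFinset] at this
    have hup : ∀ y, m < y → f.1 y = g.1 y := by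
      intro y hy
      by_contra hc
      have : y ∈ hD.toFinset := by rwa [Set.Finite.mem_toFinset]
      exact absurd (hD.toFinset.le_max' y this) (not_le.mpr hy)
    refine ⟨m, hup, ?_⟩
    rcases lt_or_gt_of_ne hmem with h | h
    · exact h
    · obtain ⟨y, hy, hy'⟩ := hle m h
      exact absurd (hup y hy) (ne_of_lt hy')
  · rintro ⟨m, hup, hlt⟩
    constructor
    · intro x hx
      refine ⟨m, ?_, hlt⟩
      rcases lt_trichotomy x m with h | h | h
      · exact h
      · exact absurd hlt (by rw [h] at hx; exact not_lt.mpr hx.le)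
      · exact absurd (hup x h) (ne_of_gt hx)
    · intro h
      rw [h] at hlt
      exact lt_irrefl _ hlt

/-- The multiset ordering on finite multisets over a well-ordered set is a
well-ordering. -/
theorem stmt0 {α : Type} [LinearOrder α] [WellFoundedLT α] :
    IsWellOrder (FinMultiset α) (fun f g => MultisetLE f g ∧ f ≠ g) := by
  refine { trichotomous := fun f g h1 h2 => (Or.elim ((?tri : ∀ f g : FinMultiset α,
              (MultisetLE f g ∧ f ≠ g) ∨ f = g ∨ (MultisetLE g f ∧ g ≠ f)) f g)
              (fun h => absurd h h1) (fun h => h.resolve_right h2)),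
            wf := ?wfd }
  case tri =>
    intro f g
    by_cases hfg : f = g
    · exact Or.inr (Or.inl hfg)
    have hD : {x | f.1 x ≠ g.1 x}.Finite := by
      apply (f.2.union g.2).subset
      intro x hx
      by_contra hc
      simp only [Set.mem_union, Function.mem_support, not_or, not_not] at hc
      exact hx (by simp [hc.1, hc.2])
    have hne' : hD.toFinset.Nonempty := by
      rw [Set.Finite.toFinset_nonempty]
      by_contra hc
      push_neg at hc
      apply hfg
      apply Subtype.ext
      funext x
      by_contra hx
      exact Set.eq_empty_iff_forall_notMem.mp hc x hx
    set m := hD.toFinset.max' hne' with hm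
    have hmem : f.1 m ≠ g.1 m := by
      have := hD.toFinset.max'_mem hne'
      rwa [Set.Finite.mem_toFinset] at this
    have hup : ∀ y, m < y → f.1 y = g.1 y := by
      intro y hy
      by_contra hc
      have : y ∈ hD.toFinset := by rwa [Set.Finite.mem_toFinset]
      exact absurd (hD.toFinset.le_max' y this) (not_le.mpr hy)
    rcases lt_or_gt_of_ne hmem with h | h
    · exact Or.inl (multisetLT_iff.mpr ⟨m, hup, h⟩)
    · exact Or.inr (Or.inr (multisetLT_iff.mpr
        ⟨m, fun y hy => (hup y hy).symm, h⟩))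
  case wfd =>
    have hwfLex : WellFounded
        (Finsupp.Lex ((· > ·) : α → α → Prop) ((· < ·) : ℕ → ℕ → Prop)) :=
      Finsupp.Lex.wellFounded' (fun n => Nat.not_lt_zero n)
        (wellFounded_lt) (IsWellFounded.wf)
    set F : FinMultiset α → (α →₀ ℕ) := fun f =>
      ⟨f.2.toFinset, f.1, fun a => by
        rw [Set.Finite.mem_toFinset]; exact Iff.rfl⟩ with hF
    apply Subrelation.wf (r := InvImage
      (Finsupp.Lex ((· > ·) : α → α → Prop) ((· < ·) : ℕ → ℕ → Prop)) F)
    · intro f g h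
      obtain ⟨m, hup, hlt⟩ := multisetLT_iff.mp h
      exact ⟨m, fun j hj => hup j hj, hlt⟩
    · exact InvImage.wf F hwfLex
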